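/- For n ≥ 4, the signless Laplacian spectral radius of S_{n,2n-1} = K₂ ∨ (K_{1,2} ∪ (n-5)K₁) satisfies q(S_{n,2n-1}) ≥ n + 1.75. -/

import Mathlib

open Matrix SimpleGraph

noncomputable def signlessLaplacian {n : ℕ} (G : SimpleGraph (Fin n)) :
    Matrix (Fin n) (Fin n) ℝ :=
  letI := Classical.decRel G.Adj
  Matrix.diagonal (fun v => (G.degree v : ℝ)) + G.adjMatrix ℝ

def IsMaxEigenvalue {n : ℕ} (M : Matrix (Fin n) (Fin n) ℝ) (q : ℝ) : Prop :=
  (∃ x : Fin n → ℝ, x ≠ 0 ∧ M.mulVec x = q • x) ∧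
  ∀ (μ : ℝ) (x : Fin n → ℝ), x ≠ 0 → M.mulVec x = μ • x → μ ≤ q

/-- The quasi-star graph `S_{n,2n-1} = K₂ ∨ (K_{1,2} ∪ (n-5)K₁)`:
vertices `0,1` are universal, and vertex `2` (the star centre) is joined
to vertices `3` and `4`. -/
def quasiStar2n1 (n : ℕ) : SimpleGraph (Fin n) :=
  SimpleGraph.fromRel (fun a b => a.val < 2 ∨ (a.val = 2 ∧ b.val < 5))


lemma adjv {n : ℕ} {a b : Fin n} :
    (quasiStar2n1 n).Adj a b ↔ a.val ≠ b.val ∧ (a.val < 2 ∨ b.val < 2 ∨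
      (a.val = 2 ∧ b.val < 5) ∨ (b.val = 2 ∧ a.val < 5)) := by
  simp only [quasiStar2n1, fromRel_adj, ne_eq, Fin.ext_iff]
  tauto

def tv (n : ℕ) : Fin n → ℝ := fun i =>
  if i.val < 2 then 4*n else if i.val = 2 then 14 else if i.val < 5 then 11 else 8

lemma tv_lt2 {n : ℕ} {i : Fin n} (h : i.val < 2) : tv n i = 4*n := by
  unfold tv; rw [if_pos h]

lemma tv_eq2 {n : ℕ} {i : Fin n} (h : i.val = 2) : tv n i = 14 := by
  unfold tv; rw [if_neg (by omega), if_pos h]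

lemma tv_34 {n : ℕ} {i : Fin n} (h : 2 < i.val) (h' : i.val < 5) : tv n i = 11 := by
  unfold tv; rw [if_neg (by omega), if_neg (by omega), if_pos h']

lemma tv_ge5 {n : ℕ} {i : Fin n} (h : 5 ≤ i.val) : tv n i = 8 := by
  unfold tv; rw [if_neg (by omega), if_neg (by omega), if_neg (by omega)]

lemma mulVec_eval {n : ℕ} (G : SimpleGraph (Fin n)) (x : Fin n → ℝ) (i : Fin n) :
    letI := Classical.decRel G.Adj
    (signlessLaplacian G).mulVec x i = ∑ j, (if G.Adj i j then x i + x j else 0) := by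
  letI := Classical.decRel G.Adj
  unfold signlessLaplacian
  rw [add_mulVec, Pi.add_apply, mulVec_diagonal, SimpleGraph.adjMatrix_mulVec_apply]
  have hd : (G.degree i : ℝ) * x i = ∑ j, (if G.Adj i j then x i else 0) := by
    rw [← Finset.sum_filter, Finset.sum_const]
    rw [SimpleGraph.degree, SimpleGraph.neighborFinset_eq_filter]
    simp [mul_comm]
  have hs : ∑ u ∈ G.neighborFinset i, x u = ∑ j, (if G.Adj i j then x j else 0) := by
    rw [SimpleGraph.neighborFinset_eq_filter, Finset.sum_filter]
  rw [hd, hs, ← Finset.sum_add_distrib]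
  apply Finset.sum_congr rfl
  intro j _
  by_cases h : G.Adj i j <;> simp [h]

lemma sum_tail {n : ℕ} (hn : 5 ≤ n) (f : Fin n → ℝ) (C : ℝ)
    (hf : ∀ i : Fin n, 5 ≤ i.val → f i = C) :
    ∑ i, f i = f ⟨0, by omega⟩ + f ⟨1, by omega⟩ + f ⟨2, by omega⟩ +
      f ⟨3, by omega⟩ + f ⟨4, by omega⟩ + (n - 5 : ℕ) * C := by
  classical
  set g : ℕ → ℝ := fun i => if h : i < n then f ⟨i, h⟩ else C with hg
  have h1 : ∑ i : Fin n, f i = ∑ i ∈ Finset.range n, g i := by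
    rw [Finset.sum_range fun i => g i]
    apply Finset.sum_congr rfl
    intro i _
    simp [hg, i.isLt]
  rw [h1, Finset.range_eq_Ico, ← Finset.sum_Ico_consecutive g (by omega : 0 ≤ 5) (by omega : 5 ≤ n)]
  have h2 : ∑ i ∈ Finset.Ico 5 n, g i = (n - 5 : ℕ) * C := by
    have hc : ∀ i ∈ Finset.Ico 5 n, g i = C := by
      intro i hi
      have hi' := Finset.mem_Ico.mp hi
      by_cases h : i < n
      · simp only [hg, dif_pos h]; exact hf ⟨i, h⟩ hi'.1
      · simp [hg, h]
    rw [Finset.sum_congr rfl hc, Finset.sum_const, Nat.card_Ico, nsmul_eq_mul]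
  rw [h2, ← Finset.range_eq_Ico]
  have h3 : ∑ i ∈ Finset.range 5, g i = g 0 + g 1 + g 2 + g 3 + g 4 := by
    simp [Finset.sum_range_succ]
  rw [h3]
  simp only [hg]
  rw [dif_pos (by omega), dif_pos (by omega), dif_pos (by omega), dif_pos (by omega), dif_pos (by omega)]

section Ecomp
variable {n : ℕ}

lemma adj_mk {a b : ℕ} (ha : a < n) (hb : b < n)
    (h : a ≠ b ∧ (a < 2 ∨ b < 2 ∨ (a = 2 ∧ b < 5) ∨ (b = 2 ∧ a < 5))) :
    (quasiStar2n1 n).Adj ⟨a, ha⟩ ⟨b, hb⟩ := adjv.mpr h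

lemma nadj_mk {a b : ℕ} (ha : a < n) (hb : b < n)
    (h : ¬(a ≠ b ∧ (a < 2 ∨ b < 2 ∨ (a = 2 ∧ b < 5) ∨ (b = 2 ∧ a < 5)))) :
    ¬ (quasiStar2n1 n).Adj ⟨a, ha⟩ ⟨b, hb⟩ := fun hadj => h (adjv.mp hadj)

lemma E0 (hn : 5 ≤ n) :
    letI := Classical.decRel (quasiStar2n1 n).Adj
    (signlessLaplacian (quasiStar2n1 n)).mulVec (tv n) ⟨0, by omega⟩
      = 4*n^2 + 8*n - 4 := by
  letI := Classical.decRel (quasiStar2n1 n).Adj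
  rw [mulVec_eval]
  rw [sum_tail hn _ (4*n + 8) (fun j hj => by
    rw [if_pos (adjv.mpr ⟨(by omega : (0:ℕ) ≠ j.val), Or.inl (by norm_num)⟩),
      tv_lt2 (by norm_num : (0:ℕ) < 2), tv_ge5 hj])]
  rw [if_neg (nadj_mk _ _ (by omega)), if_pos (adj_mk _ _ (by omega)),
    if_pos (adj_mk _ _ (by omega)), if_pos (adj_mk _ _ (by omega)),
    if_pos (adj_mk _ _ (by omega))]
  rw [tv_lt2 (by norm_num : (0:ℕ) < 2), tv_lt2 (by norm_num : (1:ℕ) < 2),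
    tv_eq2 (by norm_num : (2:ℕ) = 2), tv_34 (by norm_num : (2:ℕ) < 3) (by norm_num : (3:ℕ) < 5),
    tv_34 (by norm_num : (2:ℕ) < 4) (by norm_num : (4:ℕ) < 5)]
  have : ((n - 5 : ℕ) : ℝ) = (n : ℝ) - 5 := by
    rw [Nat.cast_sub (by omega)]; norm_num
  rw [this]; ring

lemma castn5 (hn : 5 ≤ n) : ((n - 5 : ℕ) : ℝ) = (n : ℝ) - 5 := by
  rw [Nat.cast_sub (by omega)]; norm_num

lemma E1 (hn : 5 ≤ n) :
    letI := Classical.decRel (quasiStar2n1 n).Adj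
    (signlessLaplacian (quasiStar2n1 n)).mulVec (tv n) ⟨1, by omega⟩
      = 4*n^2 + 8*n - 4 := by
  letI := Classical.decRel (quasiStar2n1 n).Adj
  rw [mulVec_eval]
  rw [sum_tail hn _ (4*n + 8) (fun j hj => by
    rw [if_pos (adjv.mpr ⟨(by omega : (1:ℕ) ≠ j.val), Or.inl (by norm_num)⟩),
      tv_lt2 (by norm_num : (1:ℕ) < 2), tv_ge5 hj])]
  rw [if_pos (adj_mk _ _ (by omega)), if_neg (nadj_mk _ _ (by omega)),
    if_pos (adj_mk _ _ (by omega)), if_pos (adj_mk _ _ (by omega)),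
    if_pos (adj_mk _ _ (by omega))]
  rw [tv_lt2 (by norm_num : (1:ℕ) < 2), tv_lt2 (by norm_num : (0:ℕ) < 2),
    tv_eq2 (by norm_num : (2:ℕ) = 2), tv_34 (by norm_num : (2:ℕ) < 3) (by norm_num : (3:ℕ) < 5),
    tv_34 (by norm_num : (2:ℕ) < 4) (by norm_num : (4:ℕ) < 5)]
  rw [castn5 hn]; ring

lemma E2 (hn : 5 ≤ n) :
    letI := Classical.decRel (quasiStar2n1 n).Adj
    (signlessLaplacian (quasiStar2n1 n)).mulVec (tv n) ⟨2, by omega⟩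
      = 8*n + 78 := by
  letI := Classical.decRel (quasiStar2n1 n).Adj
  rw [mulVec_eval]
  rw [sum_tail hn _ 0 (fun j hj => by
    rw [if_neg (fun hadj => by have := adjv.mp hadj; simp at this; omega)])]
  rw [if_pos (adj_mk _ _ (by omega)), if_pos (adj_mk _ _ (by omega)),
    if_neg (nadj_mk _ _ (by omega)), if_pos (adj_mk _ _ (by omega)),
    if_pos (adj_mk _ _ (by omega))]
  rw [tv_eq2 (by norm_num : (2:ℕ) = 2), tv_lt2 (by norm_num : (0:ℕ) < 2),
    tv_lt2 (by norm_num : (1:ℕ) < 2), tv_34 (by norm_num : (2:ℕ) < 3) (by norm_num : (3:ℕ) < 5),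
    tv_34 (by norm_num : (2:ℕ) < 4) (by norm_num : (4:ℕ) < 5)]
  ring

lemma E3 (hn : 5 ≤ n) :
    letI := Classical.decRel (quasiStar2n1 n).Adj
    (signlessLaplacian (quasiStar2n1 n)).mulVec (tv n) ⟨3, by omega⟩
      = 8*n + 47 := by
  letI := Classical.decRel (quasiStar2n1 n).Adj
  rw [mulVec_eval]
  rw [sum_tail hn _ 0 (fun j hj => by
    rw [if_neg (fun hadj => by have := adjv.mp hadj; simp at this; omega)])]
  rw [if_pos (adj_mk _ _ (by omega)), if_pos (adj_mk _ _ (by omega)),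
    if_pos (adj_mk _ _ (by omega)), if_neg (nadj_mk _ _ (by omega)),
    if_neg (nadj_mk _ _ (by omega))]
  rw [tv_34 (by norm_num : (2:ℕ) < 3) (by norm_num : (3:ℕ) < 5),
    tv_lt2 (by norm_num : (0:ℕ) < 2), tv_lt2 (by norm_num : (1:ℕ) < 2),
    tv_eq2 (by norm_num : (2:ℕ) = 2)]
  ring

lemma E4 (hn : 5 ≤ n) :
    letI := Classical.decRel (quasiStar2n1 n).Adj
    (signlessLaplacian (quasiStar2n1 n)).mulVec (tv n) ⟨4, by omega⟩
      = 8*n + 47 := by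
  letI := Classical.decRel (quasiStar2n1 n).Adj
  rw [mulVec_eval]
  rw [sum_tail hn _ 0 (fun j hj => by
    rw [if_neg (fun hadj => by have := adjv.mp hadj; simp at this; omega)])]
  rw [if_pos (adj_mk _ _ (by omega)), if_pos (adj_mk _ _ (by omega)),
    if_pos (adj_mk _ _ (by omega)), if_neg (nadj_mk _ _ (by omega)),
    if_neg (nadj_mk _ _ (by omega))]
  rw [tv_34 (by norm_num : (2:ℕ) < 4) (by norm_num : (4:ℕ) < 5),
    tv_lt2 (by norm_num : (0:ℕ) < 2), tv_lt2 (by norm_num : (1:ℕ) < 2),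
    tv_eq2 (by norm_num : (2:ℕ) = 2)]
  ring

lemma Etail (hn : 5 ≤ n) (i : Fin n) (hi : 5 ≤ i.val) :
    letI := Classical.decRel (quasiStar2n1 n).Adj
    (signlessLaplacian (quasiStar2n1 n)).mulVec (tv n) i = 8*n + 16 := by
  letI := Classical.decRel (quasiStar2n1 n).Adj
  rw [mulVec_eval]
  rw [sum_tail hn _ 0 (fun j hj => by
    rw [if_neg (fun hadj => by have := adjv.mp hadj; simp at this; omega)])]
  rw [if_pos (adjv.mpr ⟨(by omega : i.val ≠ 0), Or.inr (Or.inl (by norm_num))⟩),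
    if_pos (adjv.mpr ⟨(by omega : i.val ≠ 1), Or.inr (Or.inl (by norm_num))⟩),
    if_neg (fun hadj => by have := adjv.mp hadj; simp at this; omega),
    if_neg (fun hadj => by have := adjv.mp hadj; simp at this; omega),
    if_neg (fun hadj => by have := adjv.mp hadj; simp at this; omega)]
  rw [tv_ge5 hi, tv_lt2 (by norm_num : (0:ℕ) < 2), tv_lt2 (by norm_num : (1:ℕ) < 2)]
  ring

lemma S1v (hn : 5 ≤ n) :
    letI := Classical.decRel (quasiStar2n1 n).Adj
    ∑ i, (signlessLaplacian (quasiStar2n1 n)).mulVec (tv n) i * tv n i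
      = 32*n^3 + 128*n^2 + 64*n + 1486 := by
  letI := Classical.decRel (quasiStar2n1 n).Adj
  rw [sum_tail hn _ ((8*n + 16) * 8) (fun i hi => by
    rw [Etail hn i hi, tv_ge5 hi])]
  rw [E0 hn, E1 hn, E2 hn, E3 hn, E4 hn,
    tv_lt2 (by norm_num : (0:ℕ) < 2), tv_lt2 (by norm_num : (1:ℕ) < 2),
    tv_eq2 (by norm_num : (2:ℕ) = 2), tv_34 (by norm_num : (2:ℕ) < 3) (by norm_num : (3:ℕ) < 5),
    tv_34 (by norm_num : (2:ℕ) < 4) (by norm_num : (4:ℕ) < 5)]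
  rw [castn5 hn]; ring

lemma S2v (hn : 5 ≤ n) :
    ∑ i, tv n i * tv n i = 32*n^2 + 64*n + 118 := by
  rw [sum_tail hn _ 64 (fun i hi => by rw [tv_ge5 hi]; norm_num)]
  rw [tv_lt2 (by norm_num : (0:ℕ) < 2), tv_lt2 (by norm_num : (1:ℕ) < 2),
    tv_eq2 (by norm_num : (2:ℕ) = 2), tv_34 (by norm_num : (2:ℕ) < 3) (by norm_num : (3:ℕ) < 5),
    tv_34 (by norm_num : (2:ℕ) < 4) (by norm_num : (4:ℕ) < 5)]
  rw [castn5 hn]; ring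

end Ecomp


lemma rayleigh_le {n : ℕ} (hn : 0 < n) (M : Matrix (Fin n) (Fin n) ℝ)
    (hM : M.IsHermitian)
    (hq2 : ∀ (μ : ℝ) (x : Fin n → ℝ), x ≠ 0 → M.mulVec x = μ • x → μ ≤ q)
    (x : Fin n → ℝ) (hx : x ≠ 0) :
    (∑ i, M.mulVec x i * x i) / (∑ i, x i * x i) ≤ q := by
  classical
  haveI : Nonempty (Fin n) := ⟨⟨0, hn⟩⟩
  haveI : Nontrivial (EuclideanSpace ℝ (Fin n)) := by
    refine ⟨(WithLp.equiv 2 _).symm 0, (WithLp.equiv 2 _).symm 1, ?_⟩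
    intro h
    have := congrFun ((WithLp.equiv 2 (Fin n → ℝ)).symm.injective.eq_iff.mp h) ⟨0, hn⟩
    simp at this
  set T : EuclideanSpace ℝ (Fin n) →ₗ[ℝ] EuclideanSpace ℝ (Fin n) := Matrix.toEuclideanLin M with hT
  have hsymm : T.IsSymmetric := (Matrix.isHermitian_iff_isSymmetric).mp hM
  have heig := hsymm.hasEigenvalue_iSup_of_finiteDimensional
  set μ : ℝ := (⨆ y : { y : EuclideanSpace ℝ (Fin n) // y ≠ 0 },
      RCLike.re (inner ℝ (T y) (y : EuclideanSpace ℝ (Fin n)) : ℝ) / ‖(y : EuclideanSpace ℝ (Fin n))‖ ^ 2) with hμ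
  -- μ ≤ q
  obtain ⟨v, hv⟩ := heig.exists_hasEigenvector
  have hveq : T v = μ • v := (Module.End.mem_eigenspace_iff).mp hv.1
  have hμq : μ ≤ q := by
    refine hq2 μ (WithLp.equiv 2 _ v) ?_ ?_
    · intro h0
      exact hv.2 ((WithLp.equiv 2 _).injective (by simpa using h0))
    · have := congrArg (WithLp.equiv 2 (Fin n → ℝ)) hveq
      simpa [hT, Matrix.ofLp_toEuclideanLin_apply] using this
  refine le_trans ?_ hμq
  -- rayleigh at x ≤ μ
  set y : EuclideanSpace ℝ (Fin n) := (WithLp.equiv 2 _).symm x with hy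
  have hy0 : y ≠ 0 := fun h => hx ((WithLp.equiv 2 (Fin n → ℝ)).symm.injective (by simpa [hy] using h))
  have hinner : (inner ℝ (T y) y : ℝ) = ∑ i, M.mulVec x i * x i := by
    simp only [hy, WithLp.equiv_symm_apply, Matrix.toEuclideanLin_apply_piLp_toLp, hT]
    rw [PiLp.inner_apply]
    simp [RCLike.inner_apply, mul_comm]
  have hnorm : ‖y‖ ^ 2 = ∑ i, x i * x i := by
    rw [← real_inner_self_eq_norm_sq, PiLp.inner_apply]
    simp [hy, RCLike.inner_apply, sq]
  have hb : BddAbove (Set.range fun y : { y : EuclideanSpace ℝ (Fin n) // y ≠ 0 } =>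
      RCLike.re (inner ℝ (T y) (y : EuclideanSpace ℝ (Fin n)) : ℝ) / ‖(y : EuclideanSpace ℝ (Fin n))‖ ^ 2) := by
    refine ⟨‖LinearMap.toContinuousLinearMap T‖, ?_⟩
    rintro r ⟨z, rfl⟩
    have hz : (z : EuclideanSpace ℝ (Fin n)) ≠ 0 := z.2
    have h1 : (inner ℝ (T z) (z : EuclideanSpace ℝ (Fin n)) : ℝ) ≤ ‖T z‖ * ‖(z : EuclideanSpace ℝ (Fin n))‖ :=
      real_inner_le_norm _ _
    have h2 : ‖T (z : EuclideanSpace ℝ (Fin n))‖ ≤ ‖LinearMap.toContinuousLinearMap T‖ * ‖(z : EuclideanSpace ℝ (Fin n))‖ :=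
      (LinearMap.toContinuousLinearMap T).le_opNorm _
    have hzn : 0 < ‖(z : EuclideanSpace ℝ (Fin n))‖ := norm_pos_iff.mpr hz
    rw [div_le_iff₀ (by positivity)]
    simp only [RCLike.re_to_real]
    nlinarith [norm_nonneg (T (z : EuclideanSpace ℝ (Fin n)))]
  have := le_ciSup hb ⟨y, hy0⟩
  rw [← hμ] at this
  calc (∑ i, M.mulVec x i * x i) / (∑ i, x i * x i)
      = RCLike.re (inner ℝ (T y) y : ℝ) / ‖y‖ ^ 2 := by rw [hinner, hnorm]; simp
    _ ≤ μ := this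

lemma herm {n : ℕ} (G : SimpleGraph (Fin n)) : (signlessLaplacian G).IsHermitian := by
  classical
  unfold signlessLaplacian
  unfold Matrix.IsHermitian
  rw [conjTranspose_add]
  congr 1
  · ext i j
    by_cases h : i = j <;> simp [Matrix.conjTranspose_apply, Matrix.diagonal_apply, h, eq_comm]
  · ext i j
    simp [Matrix.conjTranspose_apply, SimpleGraph.adjMatrix_apply, G.adj_comm]


lemma K4case :
    (signlessLaplacian (quasiStar2n1 4)).mulVec (fun _ => (1:ℝ)) = (6:ℝ) • (fun _ => (1:ℝ)) := by
  letI := Classical.decRel (quasiStar2n1 4).Adj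
  funext i
  rw [mulVec_eval (quasiStar2n1 4) (fun _ => (1:ℝ)) i, Fin.sum_univ_four]
  fin_cases i <;>
    norm_num [adjv, Fin.ext_iff, show ((0:Fin 4):ℕ) = 0 from rfl, show ((1:Fin 4):ℕ) = 1 from rfl,
      show ((2:Fin 4):ℕ) = 2 from rfl, show ((3:Fin 4):ℕ) = 3 from rfl]

theorem stmt18 {n : ℕ} (hn : 4 ≤ n)
    (q : ℝ) (hq : IsMaxEigenvalue (signlessLaplacian (quasiStar2n1 n)) q) :
    (n : ℝ) + 1.75 ≤ q := by
  rcases Nat.lt_or_ge n 5 with h4 | h5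
  · have hn4 : n = 4 := by omega
    subst hn4
    have h1 : ((6:ℝ) ≤ q) := by
      refine hq.2 6 (fun _ => 1) ?_ K4case
      intro h
      have := congrFun h 0
      simp at this
    norm_num
    linarith
  · have hn0 : 0 < n := by omega
    have hx0 : tv n ≠ 0 := by
      intro h
      have := congrFun h ⟨0, by omega⟩
      rw [tv_lt2 (by norm_num : (0:ℕ) < 2)] at this
      simp at this
      omega
    have key := rayleigh_le hn0 _ (herm (quasiStar2n1 n)) hq.2 (tv n) hx0
    rw [S1v h5, S2v h5] at key
    refine le_trans ?_ key
    rw [le_div_iff₀ (by positivity)]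
    have hnr : (5:ℝ) ≤ (n:ℝ) := by exact_mod_cast h5
    nlinarith [sq_nonneg (8*(n:ℝ) - 83), sq_nonneg ((n:ℝ))]
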